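/- Let a > 0 and set b₁ = (a, 0, 0), b₂ = (0, a, 0), b₃ = (a/2, a/2, a/2) in Euclidean three-space. For every point x of three-space there exist integers m, n, p such that dist x (m·b₁ + n·b₂ + p·b₃) ≤ (√5 / 4) · a. -/

import Mathlib

lemma cube_sum_sq_le (u0 u1 u2 : ℝ) (h00 : 0 ≤ u0) (h01 : u0 ≤ 1/2)
    (h10 : 0 ≤ u1) (h11 : u1 ≤ 1/2) (h20 : 0 ≤ u2) (h21 : u2 ≤ 1/2)
    (hs : u0+u1+u2 ≤ 3/4) : u0^2+u1^2+u2^2 ≤ 5/16 := by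
  rcases le_or_gt (1/2) (u0+u1) with h | h
  · nlinarith [mul_nonneg (by linarith : (0:ℝ) ≤ 1/2-u0) (by linarith : (0:ℝ) ≤ 1/2-u1),
      mul_nonneg h20 (by linarith : (0:ℝ) ≤ u0+u1-1/2),
      mul_nonneg h20 (by linarith : (0:ℝ) ≤ 1/2-u2),
      mul_nonneg h00 (by linarith : (0:ℝ) ≤ 1/2-u0),
      mul_nonneg h10 (by linarith : (0:ℝ) ≤ 1/2-u1)]
  · nlinarith [mul_nonneg h00 h10,
      mul_nonneg (by linarith : (0:ℝ) ≤ 1/2-u2) (by linarith : (0:ℝ) ≤ 1/2-u0-u1),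
      mul_nonneg h00 (by linarith : (0:ℝ) ≤ 1/2-u0),
      mul_nonneg h10 (by linarith : (0:ℝ) ≤ 1/2-u1),
      mul_nonneg h20 (by linarith : (0:ℝ) ≤ 1/2-u2)]

lemma bcc_key (u0 u1 u2 : ℝ) (a0 : 0 ≤ u0) (a1 : u0 ≤ 1/2) (a2 : 0 ≤ u1) (a3 : u1 ≤ 1/2)
    (a4 : 0 ≤ u2) (a5 : u2 ≤ 1/2) :
    u0^2+u1^2+u2^2 ≤ 5/16 ∨ (1/2-u0)^2+(1/2-u1)^2+(1/2-u2)^2 ≤ 5/16 := by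
  rcases le_or_gt (u0+u1+u2) (3/4) with h | h
  · exact Or.inl (cube_sum_sq_le u0 u1 u2 a0 a1 a2 a3 a4 a5 h)
  · exact Or.inr (cube_sum_sq_le (1/2-u0) (1/2-u1) (1/2-u2) (by linarith) (by linarith)
      (by linarith) (by linarith) (by linarith) (by linarith) (by linarith))

lemma bcc_min_le (t0 t1 t2 s0 s1 s2 : ℝ)
    (ht0 : |t0| ≤ 1/2) (ht1 : |t1| ≤ 1/2) (ht2 : |t2| ≤ 1/2)
    (hs0 : |s0| ≤ 1/2) (hs1 : |s1| ≤ 1/2) (hs2 : |s2| ≤ 1/2)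
    (h0 : s0 = t0 + 1/2 ∨ s0 = t0 - 1/2)
    (h1 : s1 = t1 + 1/2 ∨ s1 = t1 - 1/2)
    (h2 : s2 = t2 + 1/2 ∨ s2 = t2 - 1/2) :
    t0^2+t1^2+t2^2 ≤ 5/16 ∨ s0^2+s1^2+s2^2 ≤ 5/16 := by
  have sq_eq : ∀ t s : ℝ, |s| ≤ 1/2 → (s = t + 1/2 ∨ s = t - 1/2) →
      s^2 = (1/2 - |t|)^2 := by
    intro t s hs h
    rw [abs_le] at hs
    rcases h with h | h
    · rw [h, abs_of_nonpos (by linarith : t ≤ 0)]; ring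
    · rw [h, abs_of_nonneg (by linarith : 0 ≤ t)]; ring
  have e0 := sq_eq t0 s0 hs0 h0
  have e1 := sq_eq t1 s1 hs1 h1
  have e2 := sq_eq t2 s2 hs2 h2
  rcases bcc_key |t0| |t1| |t2| (abs_nonneg _) ht0 (abs_nonneg _) ht1 (abs_nonneg _) ht2 with
    h | h
  · left; simpa [sq_abs] using h
  · right; rw [e0, e1, e2]; linarith

lemma round_half_dichotomy (y : ℝ) :
    y - 1/2 - round (y - 1/2) = (y - round y) + 1/2 ∨
    y - 1/2 - round (y - 1/2) = (y - round y) - 1/2 := by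
  have h1 : |y - round y| ≤ 1/2 := abs_sub_round y
  have h2 : |y - 1/2 - round (y - 1/2)| ≤ 1/2 := abs_sub_round (y - 1/2)
  rw [abs_le] at h1 h2
  have hd : round y - round (y - 1/2) = 0 ∨ round y - round (y - 1/2) = 1 := by
    have hlb : (-1 : ℝ) < ((round y - round (y - 1/2) : ℤ) : ℝ) := by push_cast; linarith
    have hub : ((round y - round (y - 1/2) : ℤ) : ℝ) < 2 := by push_cast; linarith
    have ha : (-1 : ℤ) < round y - round (y - 1/2) := by exact_mod_cast hlb
    have hb : round y - round (y - 1/2) < 2 := by exact_mod_cast hub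
    omega
  rcases hd with h | h
  · right
    have : ((round y : ℤ) : ℝ) = ((round (y - 1/2) : ℤ) : ℝ) := by
      exact_mod_cast congrArg (Int.cast : ℤ → ℝ) (by omega : round y = round (y - 1/2))
    linarith
  · left
    have : ((round y : ℤ) : ℝ) = ((round (y - 1/2) : ℤ) : ℝ) + 1 := by
      exact_mod_cast congrArg (Int.cast : ℤ → ℝ) (by omega : round y = round (y - 1/2) + 1)
    linarith

lemma bcc_dist_le_aux (a : ℝ) (ha : 0 < a) (x : EuclideanSpace ℝ (Fin 3)) (m n p : ℤ)
    (h : (x 0 - ((m : ℝ)*a + (p : ℝ)*(a/2)))^2 + (x 1 - ((n : ℝ)*a + (p : ℝ)*(a/2)))^2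
        + (x 2 - (p : ℝ)*(a/2))^2 ≤ 5/16 * a^2) :
    dist x (m • (!₂[a, 0, 0] : EuclideanSpace ℝ (Fin 3)) +
            n • (!₂[0, a, 0] : EuclideanSpace ℝ (Fin 3)) +
            p • (!₂[a / 2, a / 2, a / 2] : EuclideanSpace ℝ (Fin 3)))
      ≤ Real.sqrt 5 / 4 * a := by
  have hd : dist x (m • (!₂[a, 0, 0] : EuclideanSpace ℝ (Fin 3)) +
            n • (!₂[0, a, 0] : EuclideanSpace ℝ (Fin 3)) +
            p • (!₂[a / 2, a / 2, a / 2] : EuclideanSpace ℝ (Fin 3)))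
      = Real.sqrt ((x 0 - ((m : ℝ)*a + (p : ℝ)*(a/2)))^2
          + (x 1 - ((n : ℝ)*a + (p : ℝ)*(a/2)))^2 + (x 2 - (p : ℝ)*(a/2))^2) := by
    rw [EuclideanSpace.dist_eq]
    simp [Fin.sum_univ_three, Real.dist_eq, sq_abs, zsmul_eq_mul]
  rw [hd]
  calc Real.sqrt _ ≤ Real.sqrt (5/16 * a^2) := Real.sqrt_le_sqrt h
    _ = Real.sqrt 5 / 4 * a := by
        rw [show (5/16:ℝ) * a^2 = (Real.sqrt 5 / 4 * a)^2 by
          rw [show (Real.sqrt 5 / 4 * a)^2 = Real.sqrt 5 ^ 2 * a^2 / 16 by ring,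
            Real.sq_sqrt (by norm_num : (0:ℝ) ≤ 5)]; ring]
        exact Real.sqrt_sq (by positivity)

/-- The covering radius of the body-centered cubic (BCC) lattice with cubic
parameter `a` is at most `(√5/4)·a`: every point of Euclidean three-space is
within `(√5/4)·a` of some lattice point `m·b₁ + n·b₂ + p·b₃`, where
`b₁ = (a, 0, 0)`, `b₂ = (0, a, 0)`, `b₃ = (a/2, a/2, a/2)`. -/
theorem bcc_lattice_covers (a : ℝ) (ha : 0 < a)
    (x : EuclideanSpace ℝ (Fin 3)) :
    ∃ m n p : ℤ,
      dist x (m • (!₂[a, 0, 0] : EuclideanSpace ℝ (Fin 3)) +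
              n • (!₂[0, a, 0] : EuclideanSpace ℝ (Fin 3)) +
              p • (!₂[a / 2, a / 2, a / 2] : EuclideanSpace ℝ (Fin 3)))
        ≤ Real.sqrt 5 / 4 * a := by
  have ha' : a ≠ 0 := ne_of_gt ha
  set y : Fin 3 → ℝ := fun i => x i / a with hy
  set t : Fin 3 → ℝ := fun i => y i - round (y i) with htdef
  set s : Fin 3 → ℝ := fun i => y i - 1/2 - round (y i - 1/2) with hsdef
  have ht : ∀ i, |t i| ≤ 1/2 := fun i => abs_sub_round (y i)
  have hs : ∀ i, |s i| ≤ 1/2 := fun i => abs_sub_round (y i - 1/2)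
  have hdi : ∀ i, s i = t i + 1/2 ∨ s i = t i - 1/2 := fun i => round_half_dichotomy (y i)
  have hx : ∀ i, x i = y i * a := by intro i; rw [hy]; field_simp
  rcases bcc_min_le (t 0) (t 1) (t 2) (s 0) (s 1) (s 2) (ht 0) (ht 1) (ht 2)
    (hs 0) (hs 1) (hs 2) (hdi 0) (hdi 1) (hdi 2) with hc | hc
  · refine ⟨round (y 0) - round (y 2), round (y 1) - round (y 2), 2 * round (y 2),
      bcc_dist_le_aux a ha x _ _ _ ?_⟩
    have e0 : x 0 - (((round (y 0) - round (y 2) : ℤ) : ℝ)*a + ((2 * round (y 2) : ℤ) : ℝ)*(a/2))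
        = a * t 0 := by rw [hx 0]; push_cast; simp only [htdef]; ring
    have e1 : x 1 - (((round (y 1) - round (y 2) : ℤ) : ℝ)*a + ((2 * round (y 2) : ℤ) : ℝ)*(a/2))
        = a * t 1 := by rw [hx 1]; push_cast; simp only [htdef]; ring
    have e2 : x 2 - ((2 * round (y 2) : ℤ) : ℝ)*(a/2) = a * t 2 := by
      rw [hx 2]; push_cast; simp only [htdef]; ring
    rw [e0, e1, e2]
    nlinarith [sq_nonneg a, mul_le_mul_of_nonneg_left hc (sq_nonneg a)]
  · refine ⟨round (y 0 - 1/2) - round (y 2 - 1/2), round (y 1 - 1/2) - round (y 2 - 1/2),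
      2 * round (y 2 - 1/2) + 1, bcc_dist_le_aux a ha x _ _ _ ?_⟩
    have e0 : x 0 - (((round (y 0 - 1/2) - round (y 2 - 1/2) : ℤ) : ℝ)*a
        + ((2 * round (y 2 - 1/2) + 1 : ℤ) : ℝ)*(a/2)) = a * s 0 := by
      rw [hx 0]; push_cast; simp only [hsdef]; ring
    have e1 : x 1 - (((round (y 1 - 1/2) - round (y 2 - 1/2) : ℤ) : ℝ)*a
        + ((2 * round (y 2 - 1/2) + 1 : ℤ) : ℝ)*(a/2)) = a * s 1 := by
      rw [hx 1]; push_cast; simp only [hsdef]; ring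
    have e2 : x 2 - ((2 * round (y 2 - 1/2) + 1 : ℤ) : ℝ)*(a/2) = a * s 2 := by
      rw [hx 2]; push_cast; simp only [hsdef]; ring
    rw [e0, e1, e2]
    nlinarith [sq_nonneg a, mul_le_mul_of_nonneg_left hc (sq_nonneg a)]
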